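/- arXiv:2202.13138 — 4 statements merged into one kernel-verified Lean document; each statement's English description precedes it below -/
import Mathlib

section
/- For all A > 0, α > 0, γ > 0 and I ∈ ℝ, the denatured Morris–Lecar system has at least one equilibrium; that is, there exists (x, y) ∈ ℝ² with x²(1−x) − y + I = 0 and A·e^{αx} − γ·y = 0. -/
/-- The denatured Morris–Lecar system has at least one equilibrium. -/
theorem denaturedML_exists_equilibrium (A α γ I : ℝ) (hA : 0 < A) (hα : 0 < α) (hγ : 0 < γ) :
    ∃ x y : ℝ, x ^ 2 * (1 - x) - y + I = 0 ∧ A * Real.exp (α * x) - γ * y = 0 := by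
  set f : ℝ → ℝ := fun x => x ^ 2 * (1 - x) - A / γ * Real.exp (α * x) + I with hf
  have hcont : Continuous f := by
    apply Continuous.add
    · exact (continuous_pow 2 |>.mul (continuous_const.sub continuous_id)).sub
        (continuous_const.mul (Real.continuous_exp.comp (continuous_const.mul continuous_id)))
    · exact continuous_const
  -- left point a with f a ≥ 0
  set C : ℝ := max 1 (A / γ - I + 1) with hC
  have hC1 : (1 : ℝ) ≤ C := le_max_left _ _
  have hC2 : A / γ - I + 1 ≤ C := le_max_right _ _
  have hfa : 0 ≤ f (-C) := by
    have hexp : Real.exp (α * (-C)) ≤ 1 := by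
      apply Real.exp_le_one_iff.mpr
      have : 0 ≤ α * C := le_of_lt (mul_pos hα (lt_of_lt_of_le one_pos hC1))
      nlinarith
    have hAg : 0 < A / γ := div_pos hA hγ
    have h1 : A / γ * Real.exp (α * (-C)) ≤ A / γ := by
      nlinarith [Real.exp_pos (α * (-C))]
    have h2 : C ≤ (-C) ^ 2 * (1 - (-C)) := by nlinarith
    simp only [hf]
    nlinarith
  -- right point b with f b ≤ 0
  set M : ℝ := max 1 (γ * I / A) with hM
  set b : ℝ := max 1 (Real.log M / α) with hb
  have hb1 : (1 : ℝ) ≤ b := le_max_left _ _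
  have hfb : f b ≤ 0 := by
    have hexp : M ≤ Real.exp (α * b) := by
      have hM1 : (1 : ℝ) ≤ M := le_max_left _ _
      have : Real.log M ≤ α * b := by
        have h := le_max_right 1 (Real.log M / α)
        calc Real.log M = α * (Real.log M / α) := by field_simp
          _ ≤ α * b := by exact mul_le_mul_of_nonneg_left h hα.le
      calc M = Real.exp (Real.log M) := (Real.exp_log (lt_of_lt_of_le one_pos hM1)).symm
        _ ≤ Real.exp (α * b) := Real.exp_le_exp.mpr this
    have hI : I ≤ A / γ * M := by
      have : γ * I / A ≤ M := le_max_right _ _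
      rw [div_le_iff₀ hA] at this
      rw [div_mul_eq_mul_div, le_div_iff₀ hγ]
      nlinarith
    have hAg : 0 < A / γ := div_pos hA hγ
    have h2 : b ^ 2 * (1 - b) ≤ 0 := by nlinarith
    have h3 : A / γ * M ≤ A / γ * Real.exp (α * b) :=
      mul_le_mul_of_nonneg_left hexp hAg.le
    simp only [hf]
    nlinarith
  have hab : -C ≤ b := by linarith
  have : (0 : ℝ) ∈ Set.Icc (f b) (f (-C)) := ⟨hfb, hfa⟩
  obtain ⟨x, _, hx⟩ := intermediate_value_Icc' hab hcont.continuousOn this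
  refine ⟨x, A / γ * Real.exp (α * x), ?_, ?_⟩
  · simp only [hf] at hx; linarith
  · field_simp; ring
end

section
/- If A > 0, α > 0, γ > 0 satisfy A·α ≥ γ/3, then for every I ∈ ℝ the denatured Morris–Lecar system has exactly one equilibrium: there is a unique pair (x, y) ∈ ℝ² with x²(1−x) − y + I = 0 and A·e^{αx} − γ·y = 0. -/
/-- If `A*α ≥ γ/3`, then for every `I` the denatured Morris–Lecar system has
exactly one equilibrium. -/
theorem denaturedML_unique_equilibrium (A α γ : ℝ) (hA : 0 < A) (hα : 0 < α) (hγ : 0 < γ)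
    (h : A * α ≥ γ / 3) (I : ℝ) :
    ∃! p : ℝ × ℝ, p.1 ^ 2 * (1 - p.1) - p.2 + I = 0 ∧
      A * Real.exp (α * p.1) - γ * p.2 = 0 := by
  set c := A / γ with hc
  have hc0 : 0 < c := div_pos hA hγ
  set f : ℝ → ℝ := fun x => x ^ 2 * (1 - x) + I - c * Real.exp (α * x) with hf
  have hd : ∀ x : ℝ, HasDerivAt f (2 * x - 3 * x ^ 2 - c * α * Real.exp (α * x)) x := by
    intro x
    have h1 : HasDerivAt (fun x : ℝ => x ^ 2 * (1 - x))
        ((2 * x) * (1 - x) + x ^ 2 * (0 - 1)) x := by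
      exact (hasDerivAt_pow 2 x |>.congr_deriv (by ring)).mul
        ((hasDerivAt_const x (1 : ℝ)).sub (hasDerivAt_id x))
    have h2 : HasDerivAt (fun x : ℝ => c * Real.exp (α * x)) (c * (Real.exp (α * x) * α)) x := by
      have hx : HasDerivAt (fun x : ℝ => α * x) α x := by
        simpa using (hasDerivAt_id x).const_mul α
      exact ((Real.hasDerivAt_exp (α * x)).comp x hx).const_mul c
    have := (h1.add_const I).sub h2
    rw [show 2 * x - 3 * x ^ 2 - c * α * Real.exp (α * x) = 2 * x * (1 - x) + x ^ 2 * (0 - 1) - c * (Real.exp (α * x) * α) by ring]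
    exact this
  have hdiff : Differentiable ℝ f := fun x => (hd x).differentiableAt
  have hcont : Continuous f := hdiff.continuous
  have hanti : StrictAnti f := by
    apply strictAnti_of_deriv_neg
    intro x
    rw [(hd x).deriv]
    have he : 0 < Real.exp (α * x) := Real.exp_pos _
    have hcα : (1 : ℝ) / 3 ≤ c * α := by
      rw [hc, div_mul_eq_mul_div, le_div_iff₀ hγ]
      linarith
    have key : 2 * x - 3 * x ^ 2 < (1 / 3) * Real.exp (α * x) := by
      rcases le_or_gt x 0 with hx | hx
      · nlinarith
      · have h1 : α * x + 1 ≤ Real.exp (α * x) := Real.add_one_le_exp _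
        have h2 : 0 < α * x := mul_pos hα hx
        nlinarith [sq_nonneg (3 * x - 1)]
    nlinarith [mul_le_mul_of_nonneg_right hcα he.le]
  -- bounds
  set M : ℝ := max 1 (c - I + 1) with hM
  have hM1 : (1 : ℝ) ≤ M := le_max_left _ _
  have hM2 : c - I + 1 ≤ M := le_max_right _ _
  have hfa : 0 < f (-M) := by
    have he : Real.exp (α * (-M)) ≤ 1 := by
      apply Real.exp_le_one_iff.mpr
      nlinarith
    have he0 : 0 < Real.exp (α * (-M)) := Real.exp_pos _
    simp only [hf]
    nlinarith
  set b : ℝ := max 1 (I + 1) with hb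
  have hb1 : (1 : ℝ) ≤ b := le_max_left _ _
  have hb2 : I + 1 ≤ b := le_max_right _ _
  have hfb : f b < 0 := by
    have he1 : 1 ≤ Real.exp (α * b) := by
      apply Real.one_le_exp_iff.mpr
      positivity
    simp only [hf]
    nlinarith [mul_pos hc0 (Real.exp_pos (α * b)),
      mul_nonneg (mul_nonneg (sub_nonneg.mpr hb1) (sub_nonneg.mpr hb1)) (sub_nonneg.mpr hb1),
      mul_nonneg (sub_nonneg.mpr hb1) (sub_nonneg.mpr hb1)]
  have hab : -M ≤ b := by linarith
  have hsub : Set.Icc (f b) (f (-M)) ⊆ f '' Set.Icc (-M) b :=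
    intermediate_value_Icc' hab hcont.continuousOn
  obtain ⟨x₀, -, hx₀⟩ := hsub ⟨hfb.le, hfa.le⟩
  -- build the equilibrium
  refine ⟨(x₀, c * Real.exp (α * x₀)), ⟨?_, ?_⟩, ?_⟩
  · simp only [hf] at hx₀
    simp only []
    linarith
  · simp only []
    rw [hc]
    field_simp
    ring
  · rintro ⟨x, y⟩ ⟨e1, e2⟩
    simp only [] at e1 e2 ⊢
    have hy : y = c * Real.exp (α * x) := by
      rw [hc]
      field_simp
      linarith
    have hfx : f x = 0 := by
      simp only [hf]
      rw [hy] at e1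
      linarith
    have hx0 : f x₀ = 0 := hx₀
    have hxx : x = x₀ := hanti.injective (by rw [hfx, hx0])
    rw [Prod.mk.injEq]
    exact ⟨hxx, by rw [hy, hxx]⟩
end

section
/- For all A > 0, α > 0, γ > 0 there exist real numbers I₋ < I₊ such that for every I ∈ ℝ with I > I₊ or I < I₋, the denatured Morris–Lecar system has exactly one equilibrium; that is, the equation x²(1−x) + I = (A/γ)·e^{αx} has exactly one real solution x. -/
open Real Set


/-- For sufficiently large or sufficiently small external current `I`, the
denatured Morris–Lecar system has exactly one equilibrium: the equation
`x^2*(1-x) + I = (A/γ) * exp (α*x)` has exactly one real solution. -/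
theorem denaturedML_unique_equilibrium_extreme_current (A α γ : ℝ)
    (hA : 0 < A) (hα : 0 < α) (hγ : 0 < γ) :
    ∃ Iminus Iplus : ℝ, Iminus < Iplus ∧
      ∀ I : ℝ, (I > Iplus ∨ I < Iminus) →
        ∃! x : ℝ, x ^ 2 * (1 - x) + I = (A / γ) * Real.exp (α * x) := by
  set C := A / γ with hC
  have hCpos : 0 < C := div_pos hA hγ
  set g : ℝ → ℝ := fun x => C * Real.exp (α * x) + x ^ 3 - x ^ 2 with hg
  have hcont : Continuous g := by fun_prop
  have hderiv : ∀ x, HasDerivAt g (C * (α * Real.exp (α * x)) + 3 * x ^ 2 - 2 * x) x := by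
    intro x
    have h1 : HasDerivAt (fun x => Real.exp (α * x)) (Real.exp (α * x) * α) x := by
      simpa [Function.comp_def] using (Real.hasDerivAt_exp (α * x)).comp x ((hasDerivAt_id x).const_mul α)
    have h2 : HasDerivAt (fun x : ℝ => x ^ 3) (3 * x ^ 2) x := by
      simpa using (hasDerivAt_pow 3 x)
    have h3 : HasDerivAt (fun x : ℝ => x ^ 2) (2 * x) x := by
      simpa using (hasDerivAt_pow 2 x)
    have := ((h1.const_mul C).add h2).sub h3
    convert this using 1
    · rfl
    · rfl
    · rfl
    · ring
  have hderiv' : ∀ x, deriv g x = C * (α * Real.exp (α * x)) + 3 * x ^ 2 - 2 * x :=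
    fun x => (hderiv x).deriv
  have hexp_pos : ∀ x : ℝ, 0 < C * (α * Real.exp (α * x)) := fun x =>
    mul_pos hCpos (mul_pos hα (Real.exp_pos _))
  have hmono_neg : StrictMonoOn g (Iic 0) := by
    apply strictMonoOn_of_deriv_pos (convex_Iic 0) hcont.continuousOn
    intro x hx
    rw [interior_Iic] at hx
    rw [hderiv' x]
    have := hexp_pos x
    have hx0 : x < 0 := hx
    nlinarith [sq_nonneg x]
  have hmono_pos : StrictMonoOn g (Ici (2/3 : ℝ)) := by
    apply strictMonoOn_of_deriv_pos (convex_Ici _) hcont.continuousOn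
    intro x hx
    rw [interior_Ici] at hx
    rw [hderiv' x]
    have := hexp_pos x
    have hx0 : (2:ℝ)/3 < x := hx
    nlinarith
  -- max and min on [0, 2/3]
  obtain ⟨xM, hxM, hMax⟩ := isCompact_Icc.exists_isMaxOn (⟨0, by norm_num⟩ :
    (Icc (0:ℝ) (2/3)).Nonempty) hcont.continuousOn
  obtain ⟨xm, hxm, hMin⟩ := isCompact_Icc.exists_isMinOn (⟨0, by norm_num⟩ :
    (Icc (0:ℝ) (2/3)).Nonempty) hcont.continuousOn
  refine ⟨g xm - 1, g xM + 1, by have h : g xm ≤ g xM := hMin hxM; linarith, ?_⟩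
  intro I hI
  have iff_eq : ∀ x : ℝ, (x ^ 2 * (1 - x) + I = C * Real.exp (α * x)) ↔ g x = I := by
    intro x
    constructor
    · intro h
      show C * Real.exp (α * x) + x ^ 3 - x ^ 2 = I
      linear_combination -h
    · intro h
      have h' : C * Real.exp (α * x) + x ^ 3 - x ^ 2 = I := h
      linear_combination -h'
  rw [show (fun x : ℝ => x ^ 2 * (1 - x) + I = A / γ * Real.exp (α * x)) =
      fun x : ℝ => x ^ 2 * (1 - x) + I = C * Real.exp (α * x) from rfl]
  have h0mem : (0:ℝ) ∈ Icc (0:ℝ) (2/3) := by norm_num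
  have h23mem : (2/3:ℝ) ∈ Icc (0:ℝ) (2/3) := by norm_num
  rcases hI with hI | hI
  · -- large I : unique solution in (2/3, ∞)
    have key : ∀ x : ℝ, g x = I → 2/3 < x := by
      intro x hx
      by_contra hle
      push_neg at hle
      rcases le_or_gt x 0 with hx0 | hx0
      · have h1 : g x ≤ g 0 := hmono_neg.monotoneOn (mem_Iic.mpr hx0) (mem_Iic.mpr le_rfl) hx0
        have h2 : g 0 ≤ g xM := hMax h0mem
        linarith [hx ▸ (le_trans h1 h2)]
      · have h2 : g x ≤ g xM := hMax ⟨hx0.le, hle⟩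
        linarith [hx ▸ h2]
    -- existence
    set b : ℝ := max 2 (I + 1) with hb
    have hb2 : (2:ℝ) ≤ b := le_max_left _ _
    have hbI : I + 1 ≤ b := le_max_right _ _
    have hgb : I ≤ g b := by
      have : b ≤ b ^ 3 - b ^ 2 := by nlinarith
      have := Real.exp_pos (α * b)
      have hcb : 0 < C * Real.exp (α * b) := mul_pos hCpos (Real.exp_pos _)
      rw [hg]; dsimp only; nlinarith
    have hga : g (2/3) ≤ I := by
      have h : g (2/3) ≤ g xM := hMax h23mem
      have h2 : g xM ≤ I := by linarith
      exact le_trans h h2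
    have h23b : (2/3 : ℝ) ≤ b := by linarith
    obtain ⟨x, hxmem, hxeq⟩ := intermediate_value_Icc h23b (hcont.continuousOn)
      (⟨hga, hgb⟩ : I ∈ Icc (g (2/3)) (g b))
    refine ⟨x, (iff_eq x).mpr hxeq, ?_⟩
    intro y hy
    rw [iff_eq y] at hy
    exact hmono_pos.injOn (le_of_lt (key y hy)) (le_of_lt (key x hxeq)) (hy.trans hxeq.symm)
  · -- small I : unique solution in (-∞, 0)
    have key : ∀ x : ℝ, g x = I → x < 0 := by
      intro x hx
      by_contra hle
      push_neg at hle
      rcases le_or_gt x (2/3) with hx0 | hx0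
      · have h2 : g xm ≤ g x := hMin ⟨hle, hx0⟩
        linarith [hx ▸ h2]
      · have h1 : g (2/3) ≤ g x := hmono_pos.monotoneOn (mem_Ici.mpr le_rfl) (mem_Ici.mpr hx0.le) hx0.le
        have h2 : g xm ≤ g (2/3) := hMin h23mem
        linarith [hx ▸ (le_trans h2 h1)]
    set a : ℝ := min (-1) (I - 1 - C) with ha
    have ha1 : a ≤ -1 := min_le_left _ _
    have haI : a ≤ I - 1 - C := min_le_right _ _
    have hga : g a ≤ I := by
      have hexp : Real.exp (α * a) ≤ 1 := by
        apply Real.exp_le_one_iff.mpr  -- maybe name differs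
        nlinarith
      have hcube : a ^ 3 - a ^ 2 ≤ a := by nlinarith [sq_nonneg a, sq_nonneg (a+1)]
      have : C * Real.exp (α * a) ≤ C := by nlinarith
      rw [hg]; dsimp only; nlinarith
    have hg0 : I ≤ g 0 := by
      have h : g xm ≤ g 0 := hMin h0mem
      linarith
    have ha0 : a ≤ 0 := by linarith
    obtain ⟨x, hxmem, hxeq⟩ := intermediate_value_Icc ha0 (hcont.continuousOn)
      (⟨hga, hg0⟩ : I ∈ Icc (g a) (g 0))
    refine ⟨x, (iff_eq x).mpr hxeq, ?_⟩
    intro y hy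
    rw [iff_eq y] at hy
    exact hmono_neg.injOn (le_of_lt (key y hy)) (le_of_lt (key x hxeq)) (hy.trans hxeq.symm)
end

section
/- For all α > 0, γ > 0 and every I with −4/27 < I < 0, there exists A₀ > 0 such that for all A with 0 < A < A₀ the denatured Morris–Lecar system has at least three distinct equilibria; equivalently, the function f_I(x) = x²(1−x) + I − (A/γ)·e^{αx} has at least three distinct real zeros. -/
/-- For `-4/27 < I < 0` and all sufficiently small `A > 0`, the denatured
Morris–Lecar system has at least three distinct equilibria: the function
`f_I x = x^2*(1-x) + I - (A/γ) * exp (α*x)` has at least three distinct real zeros. -/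
theorem denaturedML_three_equilibria (α γ I : ℝ) (hα : 0 < α) (hγ : 0 < γ)
    (hI₁ : -4 / 27 < I) (hI₂ : I < 0) :
    ∃ A₀ : ℝ, 0 < A₀ ∧ ∀ A : ℝ, 0 < A → A < A₀ →
      ∃ x₁ x₂ x₃ : ℝ, x₁ ≠ x₂ ∧ x₁ ≠ x₃ ∧ x₂ ≠ x₃ ∧
        x₁ ^ 2 * (1 - x₁) + I - (A / γ) * Real.exp (α * x₁) = 0 ∧
        x₂ ^ 2 * (1 - x₂) + I - (A / γ) * Real.exp (α * x₂) = 0 ∧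
        x₃ ^ 2 * (1 - x₃) + I - (A / γ) * Real.exp (α * x₃) = 0 := by
  have hI₃ : 0 < 4 / 27 + I := by linarith
  refine ⟨γ * (4 / 27 + I) * Real.exp (-α),
    mul_pos (mul_pos hγ hI₃) (Real.exp_pos _), ?_⟩
  intro A hA hA₀
  set F : ℝ → ℝ := fun x => x ^ 2 * (1 - x) + I - (A / γ) * Real.exp (α * x) with hF
  have hcont : Continuous F := by fun_prop
  have hAg : 0 < A / γ := div_pos hA hγ
  have hkey : ∀ x : ℝ, x ≤ 1 → A / γ * Real.exp (α * x) < 4 / 27 + I := by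
    intro x hx
    have h1 : A / γ < (4 / 27 + I) * Real.exp (-α) := by
      rw [div_lt_iff₀ hγ]
      calc A < γ * (4 / 27 + I) * Real.exp (-α) := hA₀
        _ = (4 / 27 + I) * Real.exp (-α) * γ := by ring
    have h2 : Real.exp (α * x) ≤ Real.exp α := by
      apply Real.exp_le_exp.2
      nlinarith
    calc A / γ * Real.exp (α * x) ≤ A / γ * Real.exp α :=
          mul_le_mul_of_nonneg_left h2 hAg.le
      _ < (4 / 27 + I) * Real.exp (-α) * Real.exp α :=
          mul_lt_mul_of_pos_right h1 (Real.exp_pos _)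
      _ = 4 / 27 + I := by rw [mul_assoc, ← Real.exp_add]; simp
  have hFm1 : 0 < F (-1) := by
    have := hkey (-1) (by norm_num)
    have hexp : 0 < Real.exp (α * (-1)) := Real.exp_pos _
    simp only [hF]
    nlinarith
  have hF0 : F 0 < 0 := by
    simp only [hF]
    norm_num
    nlinarith [Real.exp_pos (α * 0)]
  have hF23 : 0 < F (2 / 3) := by
    have := hkey (2 / 3) (by norm_num)
    simp only [hF]
    nlinarith
  have hF1 : F 1 < 0 := by
    have hexp : 0 < Real.exp (α * 1) := Real.exp_pos _
    simp only [hF]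
    nlinarith
  obtain ⟨x₁, hx₁m, hx₁⟩ := intermediate_value_Icc' (by norm_num : (-1:ℝ) ≤ 0)
    hcont.continuousOn ⟨hF0.le, hFm1.le⟩
  obtain ⟨x₂, hx₂m, hx₂⟩ := intermediate_value_Icc (by norm_num : (0:ℝ) ≤ 2 / 3)
    hcont.continuousOn ⟨hF0.le, hF23.le⟩
  obtain ⟨x₃, hx₃m, hx₃⟩ := intermediate_value_Icc' (by norm_num : (2/3:ℝ) ≤ 1)
    hcont.continuousOn ⟨hF1.le, hF23.le⟩
  have h10 : x₁ < 0 := lt_of_le_of_ne hx₁m.2 (fun h => by rw [h] at hx₁; linarith)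
  have h20 : 0 < x₂ := lt_of_le_of_ne hx₂m.1 (fun h => by rw [← h] at hx₂; linarith)
  have h223 : x₂ < 2 / 3 := lt_of_le_of_ne hx₂m.2 (fun h => by rw [h] at hx₂; linarith)
  have h323 : 2 / 3 < x₃ := lt_of_le_of_ne hx₃m.1 (fun h => by rw [← h] at hx₃; linarith)
  exact ⟨x₁, x₂, x₃, ne_of_lt (h10.trans h20), ne_of_lt (by linarith), ne_of_lt (by linarith),
    hx₁, hx₂, hx₃⟩
end
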